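/- Let R be an n×n nonnegative matrix and ‖·‖ a matrix norm with ‖R‖ ≤ μ < 1, and let J_n = ‖J‖ where J is the all-ones matrix. Then for any 0 < η < 1 − μ, setting R' = R + (η/J_n)J, there exists a row vector w > 0 with ‖w‖_∞ = 1, wR' ≤ (μ+η)w componentwise, and min_i w_i ≥ η/J_n. -/

import Mathlib

open Matrix Filter Topology

/-- A (submultiplicative) matrix norm: a family of functions on real matrices of
all sizes satisfying positive definiteness, absolute homogeneity, the triangle
inequality and submultiplicativity. -/
structure MatrixNorm where
  N : ∀ {m n : ℕ}, Matrix (Fin m) (Fin n) ℝ → ℝ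
  eq_zero_iff : ∀ {m n : ℕ} (R : Matrix (Fin m) (Fin n) ℝ), N R = 0 ↔ R = 0
  smul : ∀ {m n : ℕ} (c : ℝ) (R : Matrix (Fin m) (Fin n) ℝ), N (c • R) = |c| * N R
  add_le : ∀ {m n : ℕ} (R S : Matrix (Fin m) (Fin n) ℝ), N (R + S) ≤ N R + N S
  mul_le : ∀ {m n k : ℕ} (R : Matrix (Fin m) (Fin k) ℝ) (S : Matrix (Fin k) (Fin n) ℝ),
      N (R * S) ≤ N R * N S

/-- The `n×n` all-ones matrix. -/
def allOnes (n : ℕ) : Matrix (Fin n) (Fin n) ℝ := Matrix.of fun _ _ => 1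

namespace PerronAux

lemma nN_nonneg (𝒩 : MatrixNorm) {m n : ℕ} (A : Matrix (Fin m) (Fin n) ℝ) : 0 ≤ 𝒩.N A := by
  have h0 : 𝒩.N (0 : Matrix (Fin m) (Fin n) ℝ) = 0 := (𝒩.eq_zero_iff 0).2 rfl
  have h1 : 𝒩.N ((-1 : ℝ) • A) = 𝒩.N A := by rw [𝒩.smul]; simp
  have h2 := 𝒩.add_le A ((-1 : ℝ) • A)
  have h3 : A + (-1 : ℝ) • A = 0 := by ext i j; simp
  rw [h3, h0, h1] at h2
  linarith

lemma nN_pos (𝒩 : MatrixNorm) {m n : ℕ} (A : Matrix (Fin m) (Fin n) ℝ) (hA : A ≠ 0) :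
    0 < 𝒩.N A :=
  lt_of_le_of_ne (nN_nonneg 𝒩 A) (fun h => hA ((𝒩.eq_zero_iff A).1 h.symm))

lemma entry_key {n : ℕ} (A : Matrix (Fin n) (Fin n) ℝ) (i j : Fin n) :
    Matrix.single i i (1:ℝ) * A * Matrix.single j j 1 = A i j • Matrix.single i j 1 := by
  ext a b
  by_cases ha : a = i <;> by_cases hb : b = j <;>
    simp [Matrix.mul_apply, Matrix.single, ha, hb, Finset.sum_ite_eq, Finset.sum_ite_eq',
      eq_comm (a := i) (b := a), eq_comm (a := j) (b := b)]

/-- Entry-bound constant for the matrix norm. -/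
noncomputable def Cc (𝒩 : MatrixNorm) (n : ℕ) (i j : Fin n) : ℝ :=
  𝒩.N (Matrix.single i i (1:ℝ)) * 𝒩.N (Matrix.single j j (1:ℝ)) /
    𝒩.N (Matrix.single i j (1:ℝ))

lemma std_ne_zero {n : ℕ} (i j : Fin n) : Matrix.single i j (1:ℝ) ≠ 0 := by
  intro h
  have := congrFun (congrFun h i) j
  simp at this

lemma Cc_nonneg (𝒩 : MatrixNorm) {n : ℕ} (i j : Fin n) : 0 ≤ Cc 𝒩 n i j :=
  div_nonneg (mul_nonneg (nN_nonneg _ _) (nN_nonneg _ _)) (nN_nonneg _ _)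

lemma entry_le (𝒩 : MatrixNorm) {n : ℕ} (A : Matrix (Fin n) (Fin n) ℝ) (i j : Fin n) :
    A i j ≤ Cc 𝒩 n i j * 𝒩.N A := by
  have hpos : 0 < 𝒩.N (Matrix.single i j (1:ℝ)) := nN_pos 𝒩 _ (std_ne_zero i j)
  have key := entry_key A i j
  have h1 : 𝒩.N (A i j • Matrix.single i j (1:ℝ)) = |A i j| * 𝒩.N (Matrix.single i j (1:ℝ)) :=
    𝒩.smul _ _
  have h2 : 𝒩.N (Matrix.single i i (1:ℝ) * A * Matrix.single j j 1) ≤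
      𝒩.N (Matrix.single i i (1:ℝ)) * 𝒩.N A * 𝒩.N (Matrix.single j j (1:ℝ)) := by
    calc 𝒩.N (Matrix.single i i (1:ℝ) * A * Matrix.single j j 1)
        ≤ 𝒩.N (Matrix.single i i (1:ℝ) * A) * 𝒩.N (Matrix.single j j (1:ℝ)) := 𝒩.mul_le _ _
      _ ≤ 𝒩.N (Matrix.single i i (1:ℝ)) * 𝒩.N A * 𝒩.N (Matrix.single j j (1:ℝ)) :=
          mul_le_mul_of_nonneg_right (𝒩.mul_le _ _) (nN_nonneg _ _)
  rw [key, h1] at h2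
  have h3 : A i j ≤ |A i j| := le_abs_self _
  have h4 : |A i j| ≤ Cc 𝒩 n i j * 𝒩.N A := by
    rw [Cc, div_mul_eq_mul_div, le_div_iff₀ hpos]
    calc |A i j| * 𝒩.N (Matrix.single i j 1) ≤
        𝒩.N (Matrix.single i i (1:ℝ)) * 𝒩.N A * 𝒩.N (Matrix.single j j (1:ℝ)) := h2
      _ = 𝒩.N (Matrix.single i i (1:ℝ)) * 𝒩.N (Matrix.single j j (1:ℝ)) * 𝒩.N A := by ring
  exact h3.trans h4

lemma pow_norm_le (𝒩 : MatrixNorm) {n : ℕ} (A : Matrix (Fin n) (Fin n) ℝ) (q : ℝ)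
    (hq : 𝒩.N A ≤ q) (k : ℕ) : 𝒩.N (A ^ (k + 1)) ≤ q ^ (k + 1) := by
  induction k with
  | zero => simpa using hq
  | succ k ih =>
    have h0 : 0 ≤ q := (nN_nonneg 𝒩 A).trans hq
    calc 𝒩.N (A ^ (k + 2)) = 𝒩.N (A ^ (k + 1) * A) := by rw [pow_succ]
      _ ≤ 𝒩.N (A ^ (k + 1)) * 𝒩.N A := 𝒩.mul_le _ _
      _ ≤ q ^ (k + 1) * q := mul_le_mul ih hq (nN_nonneg _ _) (pow_nonneg h0 _)
      _ = q ^ (k + 2) := by rw [← pow_succ]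

lemma pow_entries_nonneg {n : ℕ} (A : Matrix (Fin n) (Fin n) ℝ) (hA : ∀ i j, 0 ≤ A i j)
    (k : ℕ) : ∀ i j, 0 ≤ (A ^ k) i j := by
  induction k with
  | zero => intro i j; simp [Matrix.one_apply]; split <;> norm_num
  | succ k ih =>
    intro i j
    rw [pow_succ, Matrix.mul_apply]
    exact Finset.sum_nonneg fun a _ => mul_nonneg (ih i a) (hA a j)

lemma vecMul_apply' {n : ℕ} (x : Fin n → ℝ) (M : Matrix (Fin n) (Fin n) ℝ) (j : Fin n) :
    (x ᵥ* M) j = ∑ i, x i * M i j := by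
  simp [Matrix.vecMul, dotProduct]

/-- The finite-geometric-series approximate Perron vector. -/
lemma approx (𝒩 : MatrixNorm) {n : ℕ} [NeZero n] (B : Matrix (Fin n) (Fin n) ℝ)
    (hB : ∀ i j, 0 ≤ B i j) (c lam' : ℝ) (hc : 𝒩.N B ≤ c) (h1 : c < lam') (h2 : 0 < lam') :
    ∃ w : Fin n → ℝ, (∀ i, 0 ≤ w i) ∧ (∀ i, w i ≤ 1) ∧ (∃ i, w i = 1) ∧
      ∀ j, (w ᵥ* B) j ≤ lam' * w j := by
  have hc0 : 0 ≤ c := (nN_nonneg 𝒩 B).trans hc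
  set M : Matrix (Fin n) (Fin n) ℝ := lam'⁻¹ • B with hMdef
  have hM : ∀ i j, 0 ≤ M i j := fun i j =>
    mul_nonneg (inv_nonneg.2 h2.le) (hB i j)
  set q : ℝ := c / lam' with hqdef
  have hq0 : 0 ≤ q := div_nonneg hc0 h2.le
  have hq1 : q < 1 := (div_lt_one h2).2 h1
  have hMq : 𝒩.N M ≤ q := by
    rw [hMdef, 𝒩.smul, abs_of_nonneg (inv_nonneg.2 h2.le), hqdef, div_eq_inv_mul]
    exact mul_le_mul_of_nonneg_left hc (inv_nonneg.2 h2.le)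
  set Ctot : ℝ := ∑ i, ∑ j, Cc 𝒩 n i j with hCtotdef
  have hCtot0 : 0 ≤ Ctot :=
    Finset.sum_nonneg fun i _ => Finset.sum_nonneg fun j _ => Cc_nonneg 𝒩 i j
  obtain ⟨K, hK⟩ : ∃ K, q ^ K < 1 / (Ctot + 1) :=
    exists_pow_lt_of_lt_one (by positivity) hq1
  -- column sums of M^(K+1) are at most 1
  have hcol : ∀ j, ∑ i, (M ^ (K + 1)) i j ≤ 1 := by
    intro j
    have hstep : ∀ i, (M ^ (K + 1)) i j ≤ Cc 𝒩 n i j * q ^ (K + 1) := by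
      intro i
      calc (M ^ (K + 1)) i j ≤ Cc 𝒩 n i j * 𝒩.N (M ^ (K + 1)) := entry_le 𝒩 _ i j
        _ ≤ Cc 𝒩 n i j * q ^ (K + 1) :=
            mul_le_mul_of_nonneg_left (pow_norm_le 𝒩 M q hMq K) (Cc_nonneg 𝒩 i j)
    calc ∑ i, (M ^ (K + 1)) i j ≤ ∑ i, Cc 𝒩 n i j * q ^ (K + 1) :=
          Finset.sum_le_sum fun i _ => hstep i
      _ = (∑ i, Cc 𝒩 n i j) * q ^ (K + 1) := by rw [Finset.sum_mul]
      _ ≤ Ctot * q ^ (K + 1) := by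
          apply mul_le_mul_of_nonneg_right _ (pow_nonneg hq0 _)
          rw [hCtotdef]
          exact Finset.sum_le_sum fun i _ =>
            Finset.single_le_sum (fun b _ => Cc_nonneg 𝒩 i b) (Finset.mem_univ j)
      _ ≤ Ctot * q ^ K := by
          apply mul_le_mul_of_nonneg_left _ hCtot0
          exact pow_le_pow_of_le_one hq0 hq1.le (Nat.le_succ K)
      _ ≤ Ctot * (1 / (Ctot + 1)) := mul_le_mul_of_nonneg_left hK.le hCtot0
      _ ≤ 1 := by
          rw [mul_one_div, div_le_one (by positivity)]; linarith
  set u : Fin n → ℝ := fun _ => 1 with hudef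
  set v : Fin n → ℝ := ∑ k ∈ Finset.range (K + 1), u ᵥ* (M ^ k) with hvdef
  have hva : ∀ i, v i = ∑ k ∈ Finset.range (K + 1), (u ᵥ* (M ^ k)) i := by
    intro i; rw [hvdef]; exact Finset.sum_apply i _ _
  have hterm0 : ∀ i, (u ᵥ* (M ^ 0)) i = 1 := by
    intro i; simp [hudef]
  have htermnn : ∀ k i, 0 ≤ (u ᵥ* (M ^ k)) i := by
    intro k i
    rw [vecMul_apply']
    exact Finset.sum_nonneg fun a _ =>
      mul_nonneg (by simp [hudef]) (pow_entries_nonneg M hM k a i)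
  have hv1 : ∀ i, 1 ≤ v i := by
    intro i
    rw [hva i, Finset.sum_range_succ']
    have : (1:ℝ) = 0 + (u ᵥ* (M ^ 0)) i := by rw [hterm0]; ring
    rw [this]
    exact add_le_add (Finset.sum_nonneg fun k _ => htermnn (k + 1) i) le_rfl
  -- telescoping
  have htel : ∀ j, (v ᵥ* M) j = v j + (u ᵥ* (M ^ (K + 1))) j - 1 := by
    intro j
    have hswap : (v ᵥ* M) j = ∑ k ∈ Finset.range (K + 1), (u ᵥ* (M ^ (k + 1))) j := by
      rw [vecMul_apply']
      have : ∀ a, v a * M a j = ∑ k ∈ Finset.range (K + 1), (u ᵥ* (M ^ k)) a * M a j := by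
        intro a; rw [hva a, Finset.sum_mul]
      rw [Finset.sum_congr rfl fun a _ => this a, Finset.sum_comm]
      apply Finset.sum_congr rfl
      intro k _
      rw [pow_succ, ← vecMul_vecMul, vecMul_apply']
    have hsum : ∑ k ∈ Finset.range (K + 1), (u ᵥ* (M ^ (k + 1))) j =
        (∑ k ∈ Finset.range (K + 1), (u ᵥ* (M ^ k)) j) + (u ᵥ* (M ^ (K + 1))) j
          - (u ᵥ* (M ^ 0)) j := by
      have e1 := Finset.sum_range_succ' (fun k => (u ᵥ* (M ^ k)) j) (K + 1)
      have e2 := Finset.sum_range_succ (fun k => (u ᵥ* (M ^ k)) j) (K + 1)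
      rw [e2] at e1
      linarith
    rw [hswap, hsum, hterm0, ← hva]
  have hvM : ∀ j, (v ᵥ* M) j ≤ v j := by
    intro j
    rw [htel j]
    have : (u ᵥ* (M ^ (K + 1))) j ≤ 1 := by
      rw [vecMul_apply']
      calc ∑ i, u i * (M ^ (K + 1)) i j = ∑ i, (M ^ (K + 1)) i j := by simp [hudef]
        _ ≤ 1 := hcol j
    linarith
  have hvB : ∀ j, (v ᵥ* B) j ≤ lam' * v j := by
    intro j
    have hBM : ∀ a, B a j = lam' * M a j := by
      intro a
      rw [hMdef]
      simp [Matrix.smul_apply]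
      rw [← mul_assoc, mul_inv_cancel₀ h2.ne', one_mul]
    calc (v ᵥ* B) j = ∑ a, v a * B a j := vecMul_apply' _ _ _
      _ = lam' * ∑ a, v a * M a j := by
          rw [Finset.mul_sum]
          exact Finset.sum_congr rfl fun a _ => by rw [hBM a]; ring
      _ = lam' * (v ᵥ* M) j := by rw [vecMul_apply']
      _ ≤ lam' * v j := mul_le_mul_of_nonneg_left (hvM j) h2.le
  -- normalize
  obtain ⟨i₀, hi₀⟩ := Finite.exists_max v
  have hs1 : 1 ≤ v i₀ := hv1 i₀
  have hs0 : 0 < v i₀ := lt_of_lt_of_le one_pos hs1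
  refine ⟨fun i => v i / v i₀, fun i => div_nonneg (le_trans zero_le_one (hv1 i)) hs0.le,
    fun i => (div_le_one hs0).2 (hi₀ i), ⟨i₀, div_self hs0.ne'⟩, ?_⟩
  intro j
  have : (fun i => v i / v i₀) = (v i₀)⁻¹ • v := by
    ext i; simp [div_eq_inv_mul, mul_comm]
  rw [this, Matrix.smul_vecMul]
  simp only [Pi.smul_apply, smul_eq_mul]
  calc (v i₀)⁻¹ * (v ᵥ* B) j ≤ (v i₀)⁻¹ * (lam' * v j) :=
        mul_le_mul_of_nonneg_left (hvB j) (inv_nonneg.2 hs0.le)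
    _ = lam' * ((v i₀)⁻¹ * v j) := by ring

end PerronAux

open PerronAux

theorem perturbed_perron_vector {n : ℕ} [NeZero n] (𝒩 : MatrixNorm)
    (R : Matrix (Fin n) (Fin n) ℝ) (hR : ∀ i j, 0 ≤ R i j)
    (μ η : ℝ) (hRμ : 𝒩.N R ≤ μ) (hμ : μ < 1) (hη : 0 < η) (hη' : η < 1 - μ) :
    ∃ w : Fin n → ℝ, (∀ i, 0 < w i) ∧ (⨆ i, w i) = 1 ∧
      (∀ j, (w ᵥ* (R + (η / 𝒩.N (allOnes n)) • allOnes n)) j ≤ (μ + η) * w j) ∧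
      (∀ i, η / 𝒩.N (allOnes n) ≤ w i) := by
  have hn : 0 < n := Nat.pos_of_ne_zero (NeZero.ne n)
  set Jn : ℝ := 𝒩.N (allOnes n) with hJndef
  have hJpos : 0 < Jn := by
    apply nN_pos
    intro h
    have := congrFun (congrFun h ⟨0, hn⟩) ⟨0, hn⟩
    simp [allOnes] at this
  have hμ0 : 0 ≤ μ := (nN_nonneg 𝒩 R).trans hRμ
  set lam : ℝ := μ + η with hlamdef
  have hlam0 : 0 < lam := by positivity
  have hlam1 : lam < 1 := by linarith
  set R' : Matrix (Fin n) (Fin n) ℝ := R + (η / Jn) • allOnes n with hR'def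
  have hR'low : ∀ i j, η / Jn ≤ R' i j := by
    intro i j
    have : R' i j = R i j + (η / Jn) * 1 := by simp [hR'def, allOnes]
    rw [this, mul_one]
    linarith [hR i j]
  have hηJ : 0 < η / Jn := div_pos hη hJpos
  have hNR' : 𝒩.N R' ≤ lam := by
    calc 𝒩.N R' ≤ 𝒩.N R + 𝒩.N ((η / Jn) • allOnes n) := 𝒩.add_le _ _
      _ = 𝒩.N R + (η / Jn) * Jn := by rw [𝒩.smul, abs_of_pos hηJ]
      _ = 𝒩.N R + η := by rw [div_mul_cancel₀ _ hJpos.ne']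
      _ ≤ lam := by rw [hlamdef]; linarith
  -- approximating sequence
  have H : ∀ m : ℕ, ∃ w : Fin n → ℝ, (∀ i, 0 ≤ w i) ∧ (∀ i, w i ≤ 1) ∧ (∃ i, w i = 1) ∧
      ∀ j, (w ᵥ* R') j ≤ (lam * (1 + 1 / ((m : ℝ) + 1))) * w j := by
    intro m
    apply approx 𝒩 R' (fun i j => le_trans hηJ.le (hR'low i j)) lam _ hNR'
    · have hp : (0:ℝ) < (m : ℝ) + 1 := by positivity
      nlinarith [mul_pos hlam0 (one_div_pos.2 hp)]
    · positivity
  choose ws hws0 hws1 hwse hwsI using H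
  -- compactness
  have hmem : ∀ m : ℕ, ws m ∈ Set.Icc (0 : Fin n → ℝ) 1 := by
    intro m
    rw [Set.mem_Icc]
    exact ⟨fun i => hws0 m i, fun i => hws1 m i⟩
  obtain ⟨w, hwS, φ, hφ, hconv⟩ := (isCompact_Icc (a := (0 : Fin n → ℝ)) (b := 1)).tendsto_subseq hmem
  have hcoord : ∀ i, Tendsto (fun m => ws (φ m) i) atTop (𝓝 (w i)) :=
    fun i => tendsto_pi_nhds.1 hconv i
  have hwle1 : ∀ i, w i ≤ 1 := fun i => hwS.2 i
  have hw0 : ∀ i, 0 ≤ w i := fun i => hwS.1 i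
  -- limit of lam_m
  have hlamconv : Tendsto (fun m => lam * (1 + 1 / ((φ m : ℝ) + 1))) atTop (𝓝 lam) := by
    have h1 : Tendsto (fun m : ℕ => 1 / ((φ m : ℝ) + 1)) atTop (𝓝 0) :=
      tendsto_one_div_add_atTop_nhds_zero_nat.comp hφ.tendsto_atTop
    have h2 : Tendsto (fun m => lam * (1 + 1 / ((φ m : ℝ) + 1))) atTop (𝓝 (lam * (1 + 0))) :=
      (tendsto_const_nhds.add h1).const_mul lam
    simpa using h2
  -- main inequality in the limit
  have hmain : ∀ j, (w ᵥ* R') j ≤ lam * w j := by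
    intro j
    have hvm : ∀ x : Fin n → ℝ, (x ᵥ* R') j = ∑ i, x i * R' i j := fun x => vecMul_apply' x R' j
    have hf : Tendsto (fun m => (ws (φ m) ᵥ* R') j) atTop (𝓝 ((w ᵥ* R') j)) := by
      simp only [hvm]
      exact tendsto_finset_sum _ fun i _ => (hcoord i).mul_const _
    have hg : Tendsto (fun m => (lam * (1 + 1 / ((φ m : ℝ) + 1))) * ws (φ m) j)
        atTop (𝓝 (lam * w j)) := hlamconv.mul (hcoord j)
    exact le_of_tendsto_of_tendsto' hf hg fun m => hwsI (φ m) j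
  -- some coordinate of w equals 1
  have hexists1 : ∃ i, w i = 1 := by
    set idx : ℕ → Fin n := fun m => (hwse (φ m)).choose with hidxdef
    have hidx : ∀ m, ws (φ m) (idx m) = 1 := fun m => (hwse (φ m)).choose_spec
    obtain ⟨i0, hinf⟩ := Finite.exists_infinite_fiber idx
    refine ⟨i0, ?_⟩
    have hfreq : ∃ᶠ m in atTop, ws (φ m) i0 ∈ ({1} : Set ℝ) := by
      rw [Nat.frequently_atTop_iff_infinite]
      apply Set.Infinite.mono _ (Set.infinite_coe_iff.1 hinf)
      intro m hm
      have : idx m = i0 := hm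
      simpa [this] using (this ▸ hidx m)
    have := mem_closure_of_frequently_of_tendsto hfreq (hcoord i0)
    rwa [closure_singleton, Set.mem_singleton_iff] at this
  obtain ⟨i0, hi0⟩ := hexists1
  have hsum1 : 1 ≤ ∑ i, w i := by
    rw [← hi0]
    exact Finset.single_le_sum (fun i _ => hw0 i) (Finset.mem_univ i0)
  -- lower bound
  have hlow : ∀ j, η / Jn ≤ w j := by
    intro j
    have h1 : η / Jn ≤ (w ᵥ* R') j := by
      rw [vecMul_apply']
      calc η / Jn = (η / Jn) * 1 := (mul_one _).symm
        _ ≤ (η / Jn) * ∑ i, w i := mul_le_mul_of_nonneg_left hsum1 hηJ.le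
        _ = ∑ i, w i * (η / Jn) := by rw [Finset.mul_sum]; exact Finset.sum_congr rfl fun i _ => mul_comm _ _
        _ ≤ ∑ i, w i * R' i j := Finset.sum_le_sum fun i _ =>
            mul_le_mul_of_nonneg_left (hR'low i j) (hw0 i)
    have h2 : (w ᵥ* R') j ≤ lam * w j := hmain j
    have h3 : lam * w j ≤ w j := by nlinarith [hw0 j]
    linarith
  have hpos : ∀ i, 0 < w i := fun i => lt_of_lt_of_le hηJ (hlow i)
  refine ⟨w, hpos, ?_, hmain, hlow⟩
  apply le_antisymm
  · exact ciSup_le hwle1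
  · calc (1:ℝ) = w i0 := hi0.symm
      _ ≤ ⨆ i, w i := le_ciSup (Finite.bddAbove_range w) i0
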